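/- arXiv:2506.16182 — 6 statements merged into one kernel-verified Lean document; each statement's English description precedes it below -/
import Mathlib

section
/- Let n, m ≥ 1, let E, B ∈ ℝ^{n×n} be symmetric positive definite, A0 ∈ ℝ^{n×n} symmetric, a_1, …, a_m ∈ ℝ^n, and let A_m := [a_1, …, a_m] ∈ ℝ^{n×m}. Suppose (λ, v) ∈ ℝ × ℝ^n satisfies λ E v = (A0 + Σ_{i=1}^m (a_iᵀv)² a_i a_iᵀ) v and vᵀBv = 1, and suppose λE − A0 is invertible. Define G(λ) := A_mᵀ(λE−A0)⁻¹B(λE−A0)⁻¹A_m, H(λ) := A_mᵀ(λE−A0)⁻¹A_m, and μ ∈ ℝ^m by μ_i := a_iᵀv. Then (μ³)ᵀ G(λ) μ³ = 1 and H(λ) μ³ = μ, where μ³ denotes the entrywise cube of μ. -/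
open Matrix

/-- a solution of the NEPv with normalization `vᵀBv = 1` yields a
solution `μ` (with `μᵢ = aᵢᵀv`) of the polynomial system
`(μ³)ᵀ G(lam) μ³ = 1`, `H(lam) μ³ = μ`. -/
theorem stmt1 (n m : ℕ) (hn : 1 ≤ n) (hm : 1 ≤ m)
    (E B A0 : Matrix (Fin n) (Fin n) ℝ)
    (hE : E.PosDef) (hB : B.PosDef) (hA0 : A0.IsSymm)
    (a : Fin m → (Fin n → ℝ)) (lam : ℝ) (v : Fin n → ℝ)
    (heq : lam • E.mulVec v =
      (A0 + ∑ i, ((a i ⬝ᵥ v) ^ 2) • vecMulVec (a i) (a i)).mulVec v)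
    (hnorm : v ⬝ᵥ B.mulVec v = 1)
    (hinv : IsUnit (lam • E - A0))
    (Am : Matrix (Fin n) (Fin m) ℝ) (hAm : Am = Matrix.of fun i j => a j i)
    (G H : Matrix (Fin m) (Fin m) ℝ)
    (hG : G = Amᵀ * (lam • E - A0)⁻¹ * B * (lam • E - A0)⁻¹ * Am)
    (hH : H = Amᵀ * (lam • E - A0)⁻¹ * Am)
    (μ : Fin m → ℝ) (hμ : μ = fun i => a i ⬝ᵥ v) :
    (fun i => (μ i) ^ 3) ⬝ᵥ G.mulVec (fun i => (μ i) ^ 3) = 1 ∧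
      H.mulVec (fun i => (μ i) ^ 3) = μ := by
  subst hAm hG hH hμ
  set M := lam • E - A0 with hMdef
  have hdet : IsUnit M.det := (Matrix.isUnit_iff_isUnit_det M).mp hinv
  have hMsymm : Mᵀ = M := by
    have hEs : Eᵀ = E := by simpa [Matrix.IsSymm] using hE.isHermitian
    simp [hMdef, Matrix.transpose_sub, Matrix.transpose_smul, hEs, hA0.eq]
  set μ3 : Fin m → ℝ := fun i => (a i ⬝ᵥ v) ^ 3 with hμ3def
  have hkey : M.mulVec v = (Matrix.of fun i j => a j i).mulVec μ3 := by
    have h1 : M.mulVec v = lam • E.mulVec v - A0.mulVec v := by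
      simp [hMdef, Matrix.sub_mulVec, Matrix.smul_mulVec]
    rw [h1, heq]
    ext r
    simp only [Matrix.add_mulVec, Pi.sub_apply, Pi.add_apply, add_sub_cancel_left,
      Matrix.mulVec, Matrix.of_apply, dotProduct, Matrix.sum_apply,
      Matrix.smul_apply, Matrix.vecMulVec_apply, smul_eq_mul, Finset.sum_mul,
      Finset.mul_sum, hμ3def]
    rw [Finset.sum_comm]
    refine Finset.sum_congr rfl fun i _ => ?_
    have hs : ∑ x, (∑ y, a i y * v y) ^ 2 * (a i r * a i x) * v x
        = a i r * ((∑ y, a i y * v y) ^ 2 * ∑ x, a i x * v x) := by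
      rw [Finset.mul_sum, Finset.mul_sum]
      exact Finset.sum_congr rfl fun x _ => by ring
    rw [hs]; ring
  have hv : M⁻¹.mulVec ((Matrix.of fun i j => a j i).mulVec μ3) = v := by
    rw [← hkey, Matrix.mulVec_mulVec, Matrix.nonsing_inv_mul M hdet, Matrix.one_mulVec]
  constructor
  · -- G part
    have hGmv : ((Matrix.of fun i j => a j i)ᵀ * M⁻¹ * B * M⁻¹ *
        (Matrix.of fun i j => a j i)).mulVec μ3
        = (Matrix.of fun i j => a j i)ᵀ.mulVec (M⁻¹.mulVec (B.mulVec v)) := by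
      rw [← hv]
      simp [← Matrix.mulVec_mulVec]
    rw [hGmv]
    rw [Matrix.dotProduct_mulVec, Matrix.vecMul_transpose, ← hkey]
    have hMinvsymm : (M⁻¹)ᵀ = M⁻¹ := by
      rw [Matrix.transpose_nonsing_inv, hMsymm]
    calc M.mulVec v ⬝ᵥ M⁻¹.mulVec (B.mulVec v)
        = M⁻¹.mulVec (B.mulVec v) ⬝ᵥ M.mulVec v := dotProduct_comm _ _
      _ = (Mᵀ * M⁻¹).mulVec (B.mulVec v) ⬝ᵥ v := by
          rw [Matrix.dotProduct_mulVec, ← Matrix.mulVec_transpose,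
            Matrix.mulVec_mulVec]
      _ = B.mulVec v ⬝ᵥ v := by
          rw [hMsymm, Matrix.mul_nonsing_inv M hdet, Matrix.one_mulVec]
      _ = 1 := by rw [dotProduct_comm, hnorm]
  · -- H part
    have hHmv : ((Matrix.of fun i j => a j i)ᵀ * M⁻¹ *
        (Matrix.of fun i j => a j i)).mulVec μ3
        = (Matrix.of fun i j => a j i)ᵀ.mulVec v := by
      rw [← hv]
      simp [← Matrix.mulVec_mulVec]
    rw [hHmv]
    ext i
    simp [Matrix.mulVec, dotProduct, Matrix.transpose_apply]
end

section
/- Let g11, g12, g22, h11, h12, μ1, μ2 be real numbers satisfying g11·μ1⁶ + 2·g12·μ1³·μ2³ + g22·μ2⁶ = 1 and μ1 − h11·μ1³ = h12·μ2³. Then γ := μ1² satisfies the cubic equation γ³·(h12²·g11 − 2·h12·h11·g12 + h11²·g22) + γ²·(2·h12·g12 − 2·h11·g22) + γ·g22 − h12² = 0. -/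
/-- in the `m = 2` case of the reduced polynomial system,
`γ = μ1²` satisfies an explicit cubic equation. -/
theorem stmt5 (g11 g12 g22 h11 h12 μ1 μ2 : ℝ)
    (h1 : g11 * μ1 ^ 6 + 2 * g12 * μ1 ^ 3 * μ2 ^ 3 + g22 * μ2 ^ 6 = 1)
    (h2 : μ1 - h11 * μ1 ^ 3 = h12 * μ2 ^ 3) :
    (μ1 ^ 2) ^ 3 * (h12 ^ 2 * g11 - 2 * h12 * h11 * g12 + h11 ^ 2 * g22) +
      (μ1 ^ 2) ^ 2 * (2 * h12 * g12 - 2 * h11 * g22) +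
      (μ1 ^ 2) * g22 - h12 ^ 2 = 0 := by
  linear_combination h12^2 * h1 + (2*g12*h12*μ1^3 + g22*(μ1 - h11*μ1^3) + g22*h12*μ2^3) * h2
end

section
/- Let U ⊆ ℂ be open and connected, λ* ∈ U, and let h11, h12, g11, g12, g22 : U → ℂ be analytic with h11(λ*) a strictly positive real number. Let μ1, μ2 : U \ {λ*} → ℂ be analytic and satisfy, for all λ ∈ U \ {λ*}, μ1(λ) = h11(λ)·μ1(λ)³ + h12(λ)·μ2(λ)³ and g11(λ)·μ1(λ)⁶ + 2·g12(λ)·μ1(λ)³·μ2(λ)³ + g22(λ)·μ2(λ)⁶ = 1, and suppose μ2(λ) → 0 as λ → λ*. Then there exists L ∈ ℂ with L² = 1/h11(λ*) such that μ1(λ) → L as λ → λ*, and the function equal to μ1 on U \ {λ*} and to L at λ* is analytic at λ*. -/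
open Filter

open Set Function Topology

/-- removable singularity of `μ1` at `lams`: if `μ2 → 0` as
`lam → lams`, then `μ1` tends to a limit `L` with `L² = 1/h11(lams)`, and extending
`μ1` by `L` at `lams` gives a function analytic at `lams`. -/
theorem stmt6 (U : Set ℂ) (hUopen : IsOpen U) (hUconn : IsConnected U)
    (lams : ℂ) (hlams : lams ∈ U)
    (h11 h12 g11 g12 g22 : ℂ → ℂ)
    (hh11 : AnalyticOnNhd ℂ h11 U) (hh12 : AnalyticOnNhd ℂ h12 U)
    (hg11 : AnalyticOnNhd ℂ g11 U) (hg12 : AnalyticOnNhd ℂ g12 U)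
    (hg22 : AnalyticOnNhd ℂ g22 U)
    (hpos : ∃ r : ℝ, 0 < r ∧ h11 lams = (r : ℂ))
    (μ1 μ2 : ℂ → ℂ)
    (hμ1 : AnalyticOnNhd ℂ μ1 (U \ {lams}))
    (hμ2 : AnalyticOnNhd ℂ μ2 (U \ {lams}))
    (heq1 : ∀ lam ∈ U \ {lams},
      μ1 lam = h11 lam * (μ1 lam) ^ 3 + h12 lam * (μ2 lam) ^ 3)
    (heq2 : ∀ lam ∈ U \ {lams},
      g11 lam * (μ1 lam) ^ 6 + 2 * g12 lam * (μ1 lam) ^ 3 * (μ2 lam) ^ 3 +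
        g22 lam * (μ2 lam) ^ 6 = 1)
    (hlim : Tendsto μ2 (nhdsWithin lams {lams}ᶜ) (nhds 0)) :
    ∃ L : ℂ, L ^ 2 = 1 / h11 lams ∧
      Tendsto μ1 (nhdsWithin lams {lams}ᶜ) (nhds L) ∧
      AnalyticAt ℂ (Function.update μ1 lams L) lams := by
  obtain ⟨r, hr, hval⟩ := hpos
  have h11ne : h11 lams ≠ 0 := by
    rw [hval]; exact_mod_cast hr.ne'
  have hmem : ∀ᶠ lam in 𝓝[≠] lams, lam ∈ U \ {lams} := by
    filter_upwards [eventually_mem_nhdsWithin,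
      eventually_nhdsWithin_of_eventually_nhds (hUopen.eventually_mem hlams)] with lam h1 h2
    exact ⟨h2, h1⟩
  have th11 : Tendsto h11 (𝓝[≠] lams) (𝓝 (h11 lams)) :=
    ((hh11 lams hlams).continuousAt.tendsto).mono_left nhdsWithin_le_nhds
  have th12 : Tendsto h12 (𝓝[≠] lams) (𝓝 (h12 lams)) :=
    ((hh12 lams hlams).continuousAt.tendsto).mono_left nhdsWithin_le_nhds
  have tg11 : Tendsto g11 (𝓝[≠] lams) (𝓝 (g11 lams)) :=
    ((hg11 lams hlams).continuousAt.tendsto).mono_left nhdsWithin_le_nhds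
  have tg12 : Tendsto g12 (𝓝[≠] lams) (𝓝 (g12 lams)) :=
    ((hg12 lams hlams).continuousAt.tendsto).mono_left nhdsWithin_le_nhds
  have tg22 : Tendsto g22 (𝓝[≠] lams) (𝓝 (g22 lams)) :=
    ((hg22 lams hlams).continuousAt.tendsto).mono_left nhdsWithin_le_nhds
  -- bound on h12 * μ2^3
  have tC : Tendsto (fun lam => h12 lam * μ2 lam ^ 3) (𝓝[≠] lams) (𝓝 0) := by
    have := th12.mul (hlim.pow 3)
    simpa using this
  have hC : ∀ᶠ lam in 𝓝[≠] lams, ‖h12 lam * μ2 lam ^ 3‖ < 1 := by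
    have h0 : Tendsto (fun lam => ‖h12 lam * μ2 lam ^ 3‖) (𝓝[≠] lams) (𝓝 0) := by
      simpa using tC.norm
    exact h0.eventually (eventually_lt_nhds one_pos)
  have hB : ∀ᶠ lam in 𝓝[≠] lams, r / 2 ≤ ‖h11 lam‖ := by
    have h1 : Tendsto (fun lam => ‖h11 lam‖) (𝓝[≠] lams) (𝓝 r) := by
      have := th11.norm
      rw [hval] at this
      simpa [abs_of_pos hr] using this
    exact h1.eventually (eventually_ge_nhds (by linarith))
  set M : ℝ := max 1 (Real.sqrt (4 / r)) with hM
  have hM1 : 1 ≤ M := le_max_left _ _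
  have hM0 : 0 < M := lt_of_lt_of_le one_pos hM1
  have hM2 : 4 / r ≤ M ^ 2 := by
    have h1 : Real.sqrt (4 / r) ^ 2 = 4 / r := Real.sq_sqrt (by positivity)
    calc 4 / r = Real.sqrt (4 / r) ^ 2 := h1.symm
      _ ≤ M ^ 2 := by
          apply pow_le_pow_left₀ (Real.sqrt_nonneg _) (le_max_right _ _)
  have hbound : ∀ᶠ lam in 𝓝[≠] lams, ‖μ1 lam‖ ≤ M := by
    filter_upwards [hmem, hB, hC] with lam hm hb hc
    by_contra hgt
    push_neg at hgt
    have e1 := heq1 lam hm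
    have key : μ1 lam * (1 - h11 lam * μ1 lam ^ 2) = h12 lam * μ2 lam ^ 3 := by
      linear_combination e1
    have knorm : ‖μ1 lam‖ * ‖1 - h11 lam * μ1 lam ^ 2‖ = ‖h12 lam * μ2 lam ^ 3‖ := by
      rw [← norm_mul, key]
    have ha2 : M ^ 2 ≤ ‖μ1 lam‖ ^ 2 := pow_le_pow_left₀ hM0.le hgt.le 2
    have hprod : ‖h11 lam * μ1 lam ^ 2‖ = ‖h11 lam‖ * ‖μ1 lam‖ ^ 2 := by
      rw [norm_mul, norm_pow]
    have h2 : (2:ℝ) ≤ ‖h11 lam‖ * ‖μ1 lam‖ ^ 2 := by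
      have : r / 2 * (4 / r) ≤ r / 2 * M ^ 2 :=
        mul_le_mul_of_nonneg_left hM2 (by positivity)
      have hrr : r / 2 * (4 / r) = 2 := by field_simp; ring
      nlinarith [sq_nonneg ‖μ1 lam‖, mul_le_mul hb ha2 (by positivity) (norm_nonneg _)]
    have ht : ‖h11 lam‖ * ‖μ1 lam‖ ^ 2 - 1 ≤ ‖1 - h11 lam * μ1 lam ^ 2‖ := by
      calc ‖h11 lam‖ * ‖μ1 lam‖ ^ 2 - 1 = ‖h11 lam * μ1 lam ^ 2‖ - ‖(1:ℂ)‖ := by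
            rw [hprod, norm_one]
        _ ≤ ‖h11 lam * μ1 lam ^ 2 - 1‖ := norm_sub_norm_le _ _
        _ = ‖1 - h11 lam * μ1 lam ^ 2‖ := norm_sub_rev _ _
    nlinarith [norm_nonneg (μ1 lam), norm_nonneg (1 - h11 lam * μ1 lam ^ 2)]
  -- differentiability on punctured nhds
  have hd : ∀ᶠ z in 𝓝[≠] lams, DifferentiableAt ℂ μ1 z := by
    filter_upwards [hmem] with z hz
    exact (hμ1 z hz).differentiableAt
  have hbdd : IsBoundedUnder (· ≤ ·) (𝓝[≠] lams) fun z => ‖μ1 z - μ1 lams‖ := by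
    refine ⟨M + ‖μ1 lams‖, eventually_map.2 ?_⟩
    filter_upwards [hbound] with z hz
    exact (norm_sub_le _ _).trans (by linarith)
  have htend : Tendsto μ1 (𝓝[≠] lams) (𝓝 (limUnder (𝓝[≠] lams) μ1)) :=
    Complex.tendsto_limUnder_of_differentiable_on_punctured_nhds_of_bounded_under hd hbdd
  set L := limUnder (𝓝[≠] lams) μ1 with hLdef
  -- analyticity of the update
  have hsmem : {lam | (lam ∈ ({lams}ᶜ : Set ℂ) → ‖μ1 lam‖ ≤ M) ∧ lam ∈ U} ∈ 𝓝 lams := by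
    have h1 := eventually_nhdsWithin_iff.mp hbound
    exact (h1.and (hUopen.eventually_mem hlams))
  have hdiff : DifferentiableOn ℂ μ1
      ({lam | (lam ∈ ({lams}ᶜ : Set ℂ) → ‖μ1 lam‖ ≤ M) ∧ lam ∈ U} \ {lams}) := by
    intro z hz
    exact (hμ1 z ⟨hz.1.2, hz.2⟩).differentiableAt.differentiableWithinAt
  have hbdd2 : BddAbove (norm ∘ μ1 ''
      ({lam | (lam ∈ ({lams}ᶜ : Set ℂ) → ‖μ1 lam‖ ≤ M) ∧ lam ∈ U} \ {lams})) := by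
    refine ⟨M, ?_⟩
    rintro x ⟨z, ⟨hz, hzne⟩, rfl⟩
    exact hz.1 hzne
  have hupd := Complex.differentiableOn_update_limUnder_of_bddAbove hsmem hdiff hbdd2
  have hAna : AnalyticAt ℂ (Function.update μ1 lams L) lams := hupd.analyticAt hsmem
  -- limit identities
  have hL1 : L = h11 lams * L ^ 3 := by
    have t1 : Tendsto (fun lam => h11 lam * μ1 lam ^ 3 + h12 lam * μ2 lam ^ 3)
        (𝓝[≠] lams) (𝓝 (h11 lams * L ^ 3 + h12 lams * 0 ^ 3)) :=
      (th11.mul (htend.pow 3)).add (th12.mul (hlim.pow 3))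
    have t2 : Tendsto μ1 (𝓝[≠] lams) (𝓝 (h11 lams * L ^ 3 + h12 lams * 0 ^ 3)) := by
      apply t1.congr'
      filter_upwards [hmem] with lam hm
      exact (heq1 lam hm).symm
    have := tendsto_nhds_unique htend t2
    simpa using this
  have hL2 : g11 lams * L ^ 6 = 1 := by
    have t1 : Tendsto (fun lam => g11 lam * μ1 lam ^ 6 +
        2 * g12 lam * μ1 lam ^ 3 * μ2 lam ^ 3 + g22 lam * μ2 lam ^ 6)
        (𝓝[≠] lams) (𝓝 (g11 lams * L ^ 6 +
          2 * g12 lams * L ^ 3 * 0 ^ 3 + g22 lams * 0 ^ 6)) := by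
      exact ((tg11.mul (htend.pow 6)).add
        ((((tendsto_const_nhds.mul tg12).mul (htend.pow 3)).mul (hlim.pow 3)))).add
        (tg22.mul (hlim.pow 6))
    have t2 : Tendsto (fun _ : ℂ => (1 : ℂ)) (𝓝[≠] lams) (𝓝 (g11 lams * L ^ 6 +
          2 * g12 lams * L ^ 3 * 0 ^ 3 + g22 lams * 0 ^ 6)) := by
      apply t1.congr'
      filter_upwards [hmem] with lam hm
      exact heq2 lam hm
    have := tendsto_nhds_unique t2 tendsto_const_nhds
    simpa using this
  have hLne : L ≠ 0 := by
    intro h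
    rw [h] at hL2
    simp at hL2
  have hsq : L ^ 2 = 1 / h11 lams := by
    have hz : L * (h11 lams * L ^ 2 - 1) = 0 := by linear_combination -hL1
    rcases mul_eq_zero.mp hz with h | h
    · exact absurd h hLne
    · field_simp
      linear_combination h
  exact ⟨L, hsq, htend, hAna⟩
end

section
/- Let λ* ∈ ℝ, and let h11, h12, μ1 : ℝ → ℝ be real-analytic in a neighborhood of λ* with h11(λ*) > 0, μ1(λ*)² = 1/h11(λ*), and h12(λ*) ≠ 0. Let μ2 : ℝ → ℝ be a function satisfying h12(λ)·μ2(λ)³ = μ1(λ) − h11(λ)·μ1(λ)³ for all λ in a neighborhood of λ*. Then μ2(λ)² = O(|λ − λ*|^{2/3}) as λ → λ*, i.e. the function λ ↦ μ2(λ)² is big-O of λ ↦ |λ − λ*|^{2/3} with respect to the filter of neighborhoods of λ*. -/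
open Filter Asymptotics

/-- near a branch point `lams` with `μ1(lams)² = 1/h11(lams)` and
`h12(lams) ≠ 0`, one has `μ2(λ)² = O(|λ - lams|^(2/3))` as `λ → lams`. -/
theorem stmt7 (lams : ℝ) (h11 h12 μ1 : ℝ → ℝ)
    (hh11 : AnalyticAt ℝ h11 lams) (hh12 : AnalyticAt ℝ h12 lams)
    (hμ1 : AnalyticAt ℝ μ1 lams)
    (hpos : 0 < h11 lams) (hμ1sq : (μ1 lams) ^ 2 = 1 / h11 lams)
    (hne : h12 lams ≠ 0)
    (μ2 : ℝ → ℝ)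
    (heq : ∀ᶠ lam in nhds lams,
      h12 lam * (μ2 lam) ^ 3 = μ1 lam - h11 lam * (μ1 lam) ^ 3) :
    (fun lam => (μ2 lam) ^ 2) =O[nhds lams]
      (fun lam => |lam - lams| ^ ((2 : ℝ) / 3)) := by
  set f : ℝ → ℝ := fun lam => μ1 lam - h11 lam * μ1 lam ^ 3 with hfdef
  have h0 : h11 lams ≠ 0 := ne_of_gt hpos
  have hfa : AnalyticAt ℝ f lams := hμ1.sub (hh11.mul (hμ1.pow 3))
  have hmul : h11 lams * μ1 lams ^ 2 = 1 := by
    rw [hμ1sq]; field_simp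
  have hf0 : f lams = 0 := by
    simp only [hfdef]
    linear_combination (-μ1 lams) * hmul
  have hO1 : f =O[nhds lams] fun x => x - lams := by
    have := hfa.differentiableAt.isBigO_sub
    simpa [hf0] using this
  have hinv : Filter.Tendsto (fun x => (h12 x)⁻¹) (nhds lams) (nhds (h12 lams)⁻¹) :=
    (hh12.continuousAt.inv₀ hne).tendsto
  have hbd : (fun x => (h12 x)⁻¹) =O[nhds lams] (fun _ => (1:ℝ)) :=
    hinv.isBigO_one ℝ
  have hne' : ∀ᶠ x in nhds lams, h12 x ≠ 0 :=
    hh12.continuousAt.eventually_ne hne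
  have hO2 : (fun x => μ2 x ^ 3) =O[nhds lams] fun x => x - lams := by
    have hmo : (fun x => f x * (h12 x)⁻¹) =O[nhds lams] fun x => (x - lams) * 1 :=
      hO1.mul hbd
    have h' : (fun x => μ2 x ^ 3) =ᶠ[nhds lams] fun x => f x * (h12 x)⁻¹ := by
      filter_upwards [heq, hne'] with x hx hx'
      have : f x = h12 x * μ2 x ^ 3 := hx.symm
      rw [this]
      field_simp
    calc (fun x => μ2 x ^ 3) =O[nhds lams] (fun x => (x - lams) * 1) :=
          h'.trans_isBigO hmo
      _ =O[nhds lams] fun x => x - lams := by simp [isBigO_refl]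
  obtain ⟨c, hc, hbound⟩ := hO2.exists_nonneg
  rw [isBigOWith_iff] at hbound
  apply IsBigO.of_bound (c ^ ((2:ℝ)/3))
  filter_upwards [hbound] with x hx
  have hnn : (0:ℝ) ≤ |μ2 x| := abs_nonneg _
  have h3 : |μ2 x| ^ (3:ℕ) ≤ c * |x - lams| := by
    simpa [Real.norm_eq_abs, abs_pow] using hx
  calc ‖μ2 x ^ 2‖ = |μ2 x| ^ (2:ℕ) := by rw [Real.norm_eq_abs, abs_pow]
    _ = |μ2 x| ^ ((2:ℕ):ℝ) := (Real.rpow_natCast _ 2).symm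
    _ = (|μ2 x| ^ ((3:ℕ):ℝ)) ^ ((2:ℝ)/3) := by
        rw [← Real.rpow_mul hnn]; norm_num
    _ = (|μ2 x| ^ (3:ℕ)) ^ ((2:ℝ)/3) := by rw [Real.rpow_natCast]
    _ ≤ (c * |x - lams|) ^ ((2:ℝ)/3) :=
        Real.rpow_le_rpow (by positivity) h3 (by norm_num)
    _ = c ^ ((2:ℝ)/3) * |x - lams| ^ ((2:ℝ)/3) := Real.mul_rpow hc (abs_nonneg _)
    _ ≤ c ^ ((2:ℝ)/3) * ‖|x - lams| ^ ((2:ℝ)/3)‖ := by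
        rw [Real.norm_eq_abs, abs_of_nonneg (Real.rpow_nonneg (abs_nonneg _) _)]
end

section
/- Let n ≥ 1, A0 ∈ ℝ^{n×n} symmetric, a ∈ ℝ^n, and λ ∈ ℝ such that λI − A0 is invertible. Suppose v ∈ ℝ^n satisfies λ v = (A0 + (aᵀv)²·a·aᵀ)·v and ‖v‖ = 1 (Euclidean norm). Then (aᵀv)⁶ · aᵀ(λI − A0)⁻²a = 1, where (λI − A0)⁻² := ((λI − A0)⁻¹)². -/
open Matrix

/-- for the single-term NEPv `λv = (A0 + (aᵀv)² a aᵀ)v` with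
`‖v‖ = 1` (i.e. `vᵀv = 1`), the scalar `μ = aᵀv` satisfies
`μ⁶ · aᵀ(λI - A0)⁻² a = 1`. -/
theorem stmt13 (n : ℕ) (hn : 1 ≤ n)
    (A0 : Matrix (Fin n) (Fin n) ℝ) (hA0 : A0.IsSymm)
    (a : Fin n → ℝ) (lam : ℝ)
    (hinv : IsUnit (lam • (1 : Matrix (Fin n) (Fin n) ℝ) - A0))
    (v : Fin n → ℝ)
    (heq : lam • v = (A0 + ((a ⬝ᵥ v) ^ 2) • vecMulVec a a).mulVec v)
    (hnorm : v ⬝ᵥ v = 1) :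
    (a ⬝ᵥ v) ^ 6 *
      (a ⬝ᵥ (((lam • (1 : Matrix (Fin n) (Fin n) ℝ) - A0)⁻¹) ^ 2).mulVec a) = 1 := by
  set B : Matrix (Fin n) (Fin n) ℝ := lam • (1 : Matrix (Fin n) (Fin n) ℝ) - A0 with hB
  set μ : ℝ := a ⬝ᵥ v with hμ
  have hBsymm : Bᵀ = B := by
    rw [hB, transpose_sub, transpose_smul, transpose_one, hA0.eq]
  have hdet : IsUnit B.det := (Matrix.isUnit_iff_isUnit_det B).mp hinv
  have hinvB : B⁻¹ * B = 1 := Matrix.nonsing_inv_mul B hdet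
  have hBinvsymm : (B⁻¹)ᵀ = B⁻¹ := by
    rw [Matrix.transpose_nonsing_inv, hBsymm]
  -- B v = μ³ • a
  have hvv : (vecMulVec a a).mulVec v = μ • a := by
    ext i
    simp only [vecMulVec, mulVec, dotProduct, Pi.smul_apply, smul_eq_mul, of_apply]
    rw [hμ, dotProduct, Finset.sum_mul]
    apply Finset.sum_congr rfl
    intro x _
    ring
  have hBv : B.mulVec v = (μ ^ 3) • a := by
    rw [hB, Matrix.sub_mulVec]
    have : (1 : Matrix (Fin n) (Fin n) ℝ).mulVec v = v := Matrix.one_mulVec v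
    rw [Matrix.smul_mulVec, this]
    have := heq
    rw [Matrix.add_mulVec, Matrix.smul_mulVec, hvv] at this
    rw [this]
    ext i
    simp only [Pi.sub_apply, Pi.add_apply, Pi.smul_apply, smul_eq_mul]
    ring
  have hv : v = (μ ^ 3) • B⁻¹.mulVec a := by
    have : B⁻¹.mulVec (B.mulVec v) = B⁻¹.mulVec ((μ ^ 3) • a) := by rw [hBv]
    rwa [Matrix.mulVec_mulVec, hinvB, Matrix.one_mulVec, Matrix.mulVec_smul] at this
  have key : a ⬝ᵥ ((B⁻¹) ^ 2).mulVec a = (B⁻¹.mulVec a) ⬝ᵥ (B⁻¹.mulVec a) := by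
    rw [pow_two, ← Matrix.mulVec_mulVec, Matrix.dotProduct_mulVec,
      ← Matrix.mulVec_transpose, hBinvsymm]
  rw [key]
  calc μ ^ 6 * (B⁻¹.mulVec a ⬝ᵥ B⁻¹.mulVec a)
      = ((μ ^ 3) • B⁻¹.mulVec a) ⬝ᵥ ((μ ^ 3) • B⁻¹.mulVec a) := by
        rw [smul_dotProduct, dotProduct_smul, smul_smul, ← pow_add,
          smul_eq_mul]
    _ = v ⬝ᵥ v := by rw [← hv]
    _ = 1 := hnorm
end

section
/- Let n ≥ 1, A0 ∈ ℝ^{n×n} symmetric, a ∈ ℝ^n with a ≠ 0, and λ ∈ ℝ such that λI − A0 is invertible. Define f(λ) := (aᵀ(λI − A0)⁻²a)^{−1/3}, where (λI − A0)⁻² := ((λI − A0)⁻¹)² (note aᵀ(λI − A0)⁻²a = ‖(λI − A0)⁻¹a‖² > 0). Suppose v ∈ ℝ^n satisfies (A0 − λI + f(λ)·a·aᵀ)·v = 0 and ‖v‖ = 1 (Euclidean norm). Then (aᵀv)² = f(λ) and consequently λ v = (A0 + (aᵀv)²·a·aᵀ)·v. -/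
open Matrix

/-- converse direction for one nonlinear term: a normalized solution
of the NEP `(A0 - λI + f(λ) a aᵀ)v = 0`, where `f(λ) = (aᵀ(λI - A0)⁻² a)^(-1/3)`,
satisfies `(aᵀv)² = f(λ)` and hence solves the NEPv `λv = (A0 + (aᵀv)² a aᵀ)v`. -/
theorem stmt14 (n : ℕ) (hn : 1 ≤ n)
    (A0 : Matrix (Fin n) (Fin n) ℝ) (hA0 : A0.IsSymm)
    (a : Fin n → ℝ) (ha : a ≠ 0) (lam : ℝ)
    (hinv : IsUnit (lam • (1 : Matrix (Fin n) (Fin n) ℝ) - A0))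
    (f : ℝ)
    (hf : f = (a ⬝ᵥ (((lam • (1 : Matrix (Fin n) (Fin n) ℝ) - A0)⁻¹) ^ 2).mulVec a)
      ^ (-(1 / 3) : ℝ))
    (v : Fin n → ℝ)
    (heq : (A0 - lam • (1 : Matrix (Fin n) (Fin n) ℝ) + f • vecMulVec a a).mulVec v = 0)
    (hnorm : v ⬝ᵥ v = 1) :
    (a ⬝ᵥ v) ^ 2 = f ∧
      lam • v = (A0 + ((a ⬝ᵥ v) ^ 2) • vecMulVec a a).mulVec v := by
  set M := lam • (1 : Matrix (Fin n) (Fin n) ℝ) - A0 with hM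
  have hdet : IsUnit M.det := (Matrix.isUnit_iff_isUnit_det M).mp hinv
  have hMsymm : Mᵀ = M := by
    simp [hM, Matrix.transpose_sub, Matrix.transpose_smul, hA0.eq]
  have hMinvsymm : (M⁻¹)ᵀ = M⁻¹ := by
    rw [Matrix.transpose_nonsing_inv, hMsymm]
  set u := M⁻¹.mulVec a with hu
  -- a = M *ᵥ u, so u ≠ 0
  have hau : a = M.mulVec u := by
    rw [hu, Matrix.mulVec_mulVec, Matrix.mul_nonsing_inv M hdet, Matrix.one_mulVec]
  have hune : u ≠ 0 := by
    intro h
    apply ha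
    rw [hau, h, Matrix.mulVec_zero]
  -- s = u ⬝ᵥ u
  have hs : a ⬝ᵥ ((M⁻¹) ^ 2).mulVec a = u ⬝ᵥ u := by
    rw [pow_two, ← Matrix.mulVec_mulVec, Matrix.dotProduct_mulVec, ← hMinvsymm,
      Matrix.vecMul_transpose, hMinvsymm]
  set s := u ⬝ᵥ u with hsdef
  have hspos : 0 < s := by
    rcases lt_or_eq_of_le (Finset.sum_nonneg fun i _ => mul_self_nonneg (u i) :
        (0:ℝ) ≤ s) with h | h
    · exact h
    · exact absurd (dotProduct_self_eq_zero.mp h.symm) hune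
  have hfs : f = s ^ (-(1/3) : ℝ) := by rw [hf, hs]
  -- compute M *ᵥ v
  have hvv : (vecMulVec a a).mulVec v = (a ⬝ᵥ v) • a := by
    ext i
    simp [Matrix.mulVec, Matrix.vecMulVec, dotProduct, Finset.mul_sum, mul_comm,
      mul_assoc, mul_left_comm]
  have key : M.mulVec v = (f * (a ⬝ᵥ v)) • a := by
    have h1 := heq
    simp only [Matrix.add_mulVec, Matrix.sub_mulVec, Matrix.smul_mulVec,
      Matrix.one_mulVec, hvv] at h1
    have : M.mulVec v = lam • v - A0.mulVec v := by
      rw [hM, Matrix.sub_mulVec, Matrix.smul_mulVec, Matrix.one_mulVec]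
    rw [this]
    linear_combination (norm := module) -h1
  -- v = c • u
  have hveq : v = (f * (a ⬝ᵥ v)) • u := by
    have : M⁻¹.mulVec (M.mulVec v) = v := by
      rw [Matrix.mulVec_mulVec, Matrix.nonsing_inv_mul M hdet, Matrix.one_mulVec]
    conv_lhs => rw [← this]
    rw [key, Matrix.mulVec_smul, hu]
  -- norm condition
  have hcs : (f * (a ⬝ᵥ v)) ^ 2 * s = 1 := by
    have h2 := hnorm
    rw [hveq] at h2
    rw [smul_dotProduct, dotProduct_smul, smul_eq_mul, smul_eq_mul] at h2
    rw [← h2, hsdef]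
    ring
  -- rpow arithmetic
  have hf2s : f ^ 2 * s = s ^ ((1:ℝ)/3) := by
    rw [hfs, ← Real.rpow_natCast (s ^ (-(1/3):ℝ)) 2, ← Real.rpow_mul hspos.le]
    nth_rewrite 2 [← Real.rpow_one s]
    rw [← Real.rpow_add hspos]
    norm_num
  have hfpos : 0 < f := by
    rw [hfs]; exact Real.rpow_pos_of_pos hspos _
  have part1 : (a ⬝ᵥ v) ^ 2 = f := by
    have h1 : (a ⬝ᵥ v) ^ 2 * (s ^ ((1:ℝ)/3)) = 1 := by
      rw [← hf2s, ← hcs]; ring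
    have h2 : s ^ ((1:ℝ)/3) * s ^ (-(1/3):ℝ) = 1 := by
      rw [← Real.rpow_add hspos]; norm_num
    calc (a ⬝ᵥ v) ^ 2 = (a ⬝ᵥ v) ^ 2 * (s ^ ((1:ℝ)/3) * s ^ (-(1/3):ℝ)) := by
          rw [h2, mul_one]
      _ = ((a ⬝ᵥ v) ^ 2 * s ^ ((1:ℝ)/3)) * s ^ (-(1/3):ℝ) := by ring
      _ = f := by rw [h1, one_mul, hfs]
  refine ⟨part1, ?_⟩
  rw [Matrix.add_mulVec, Matrix.smul_mulVec, hvv, part1]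
  have hMv : M.mulVec v = lam • v - A0.mulVec v := by
    rw [hM, Matrix.sub_mulVec, Matrix.smul_mulVec, Matrix.one_mulVec]
  have := key
  rw [hMv] at this
  rw [smul_smul]
  linear_combination (norm := module) this
end
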